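/- Let ν be a Borel probability measure on ℝ whose support is contained in a compact interval and which satisfies ν((−∞,0)) = ν((0,∞)) = 1/2. Define Δ(t) = ν((0,t)) for t > 0 and Δ(t) = ν((t,0)) for t < 0. Then for every n ≥ 1, every sequence of empirical medians (m̂_n) and every t > 0, P(|m̂_n| ≥ t) ≤ (1 − 4Δ(t)²)^{n/2} + (1 − 4Δ(−t)²)^{n/2}. -/

import Mathlib

open MeasureTheory

private lemma median_count {n : ℕ} (hn : 1 ≤ n) (Z : ℕ → ℝ) (m t : ℝ) (ht : t ≤ m)
    (hmin : ∀ β : ℝ, (∑ k ∈ Finset.range n, |m - Z k|) ≤ ∑ k ∈ Finset.range n, |β - Z k|) :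
    (n : ℝ) / 2 ≤ ∑ k ∈ Finset.range n, (if t ≤ Z k then (1:ℝ) else 0) := by
  classical
  have hFG : ((Finset.range n).filter (fun k => t ≤ Z k)).card
      + ((Finset.range n).filter (fun k => ¬ t ≤ Z k)).card = n := by
    rw [Finset.card_filter_add_card_filter_not, Finset.card_range]
  set F := (Finset.range n).filter (fun k => t ≤ Z k) with hF
  set G := (Finset.range n).filter (fun k => ¬ t ≤ Z k) with hG
  have hGF : G.card ≤ F.card := by
    by_contra hc
    push_neg at hc
    have hGne : G.Nonempty := Finset.card_pos.mp (lt_of_le_of_lt (Nat.zero_le _) hc)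
    obtain ⟨j, hjG, hjmax⟩ := G.exists_max_image Z hGne
    set b := Z j with hb
    have hbt : b < t := lt_of_not_ge (Finset.mem_filter.mp hjG).2
    have hbm : b < m := lt_of_lt_of_le hbt ht
    have hkey : ∀ k ∈ Finset.range n,
        (if t ≤ Z k then -(m - b) else (m - b)) ≤ |m - Z k| - |b - Z k| := by
      intro k hk
      by_cases hcase : t ≤ Z k
      · simp only [hcase, if_true]
        have h1 : |b - Z k| ≤ |b - m| + |m - Z k| := by
          calc |b - Z k| = |(b - m) + (m - Z k)| := by ring_nf
          _ ≤ |b - m| + |m - Z k| := abs_add_le _ _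
        have h2 : |b - m| = m - b := by rw [abs_sub_comm]; exact abs_of_pos (by linarith)
        linarith
      · have hkG : k ∈ G := Finset.mem_filter.mpr ⟨hk, hcase⟩
        have hZb : Z k ≤ b := hjmax k hkG
        simp only [hcase, if_false]
        rw [abs_of_nonneg (by linarith : (0:ℝ) ≤ m - Z k),
          abs_of_nonneg (by linarith : (0:ℝ) ≤ b - Z k)]
        linarith
    have hsum1 : (∑ k ∈ Finset.range n, (if t ≤ Z k then -(m - b) else (m - b)))
        ≤ ∑ k ∈ Finset.range n, (|m - Z k| - |b - Z k|) := Finset.sum_le_sum hkey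
    have hsum2 : (∑ k ∈ Finset.range n, (|m - Z k| - |b - Z k|)) ≤ 0 := by
      rw [Finset.sum_sub_distrib]
      linarith [hmin b]
    have hsum3 : (∑ k ∈ Finset.range n, (if t ≤ Z k then -(m - b) else (m - b)))
        = (F.card : ℝ) * (-(m - b)) + (G.card : ℝ) * (m - b) := by
      rw [Finset.sum_ite, Finset.sum_const, Finset.sum_const]
      simp [hF, hG, nsmul_eq_mul]
    have hcast : (F.card : ℝ) < (G.card : ℝ) := by exact_mod_cast hc
    rw [hsum3] at hsum1
    nlinarith
  have hcount : (∑ k ∈ Finset.range n, (if t ≤ Z k then (1:ℝ) else 0)) = F.card := by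
    rw [Finset.sum_ite, Finset.sum_const, Finset.sum_const]
    simp [hF]
  rw [hcount]
  have h2 : n ≤ 2 * F.card := by omega
  have h3 : (n:ℝ) ≤ 2 * F.card := by exact_mod_cast h2
  linarith

private lemma median_count_neg {n : ℕ} (hn : 1 ≤ n) (Z : ℕ → ℝ) (m t : ℝ) (ht : m ≤ -t)
    (hmin : ∀ β : ℝ, (∑ k ∈ Finset.range n, |m - Z k|) ≤ ∑ k ∈ Finset.range n, |β - Z k|) :
    (n : ℝ) / 2 ≤ ∑ k ∈ Finset.range n, (if Z k ≤ -t then (1:ℝ) else 0) := by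
  have hmin' : ∀ β : ℝ, (∑ k ∈ Finset.range n, |(-m) - (-Z k)|)
      ≤ ∑ k ∈ Finset.range n, |β - (-Z k)| := by
    intro β
    have h1 : ∀ k, |(-m) - (-Z k)| = |m - Z k| := fun k => by
      rw [show (-m) - (-Z k) = -(m - Z k) by ring, abs_neg]
    have h2 : ∀ k, |β - (-Z k)| = |(-β) - Z k| := fun k => by
      rw [show β - (-Z k) = -((-β) - Z k) by ring, abs_neg]
    simp_rw [h1, h2]
    exact hmin (-β)
  have h := median_count hn (fun k => -Z k) (-m) t (by linarith) hmin'
  have hiff : ∀ k, (if t ≤ -Z k then (1:ℝ) else 0) = (if Z k ≤ -t then (1:ℝ) else 0) :=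
    fun k => if_congr le_neg rfl rfl
  simpa only [hiff] using h


private lemma chernoff_half {Ω : Type*} [MeasurableSpace Ω] (P : Measure Ω) [IsProbabilityMeasure P]
    (n : ℕ) (hn : 1 ≤ n) (X : ℕ → Ω → ℝ)
    (hX01 : ∀ k ω, X k ω = 0 ∨ X k ω = 1)
    (hmeas : ∀ k, Measurable (X k))
    (hindep : ProbabilityTheory.iIndepFun X P)
    (p : ℝ) (hp : ∀ k, (P {ω | X k ω = 1}).toReal = p) (hp2 : p ≤ 1/2) :
    (P {ω | (n:ℝ)/2 ≤ ∑ k ∈ Finset.range n, X k ω}).toReal ≤ (4*p*(1-p)) ^ ((n:ℝ)/2) := by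
  have hp0 : 0 ≤ p := (hp 0) ▸ ENNReal.toReal_nonneg
  have hrhs0 : (0:ℝ) ≤ (4*p*(1-p)) ^ ((n:ℝ)/2) :=
    Real.rpow_nonneg (by nlinarith) _
  rcases eq_or_lt_of_le hp0 with hp0' | hp0'
  · -- p = 0 case
    have hzero : ∀ k, P {ω | X k ω = 1} = 0 := by
      intro k
      have h1 := hp k
      rw [← hp0'] at h1
      exact (ENNReal.toReal_eq_zero_iff _).mp h1 |>.resolve_right (measure_ne_top _ _)
    have hsub : {ω | (n:ℝ)/2 ≤ ∑ k ∈ Finset.range n, X k ω}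
        ⊆ ⋃ k ∈ Finset.range n, {ω | X k ω = 1} := by
      intro ω hω
      by_contra hcon
      simp only [Set.mem_iUnion, Set.mem_setOf_eq, not_exists] at hcon
      have hall : ∀ k ∈ Finset.range n, X k ω = 0 := fun k hk =>
        (hX01 k ω).resolve_right (hcon k hk)
      have hs : (∑ k ∈ Finset.range n, X k ω) = 0 := Finset.sum_eq_zero hall
      rw [Set.mem_setOf_eq, hs] at hω
      have hn' : (0:ℝ) < (n:ℝ)/2 := by
        have : (1:ℝ) ≤ n := by exact_mod_cast hn
        linarith
      linarith
    have hPz : P {ω | (n:ℝ)/2 ≤ ∑ k ∈ Finset.range n, X k ω} = 0 := by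
      refine measure_mono_null hsub ?_
      refine measure_biUnion_null_iff (Finset.range n).countable_toSet |>.mpr ?_
      intro k _
      exact hzero k
    rw [hPz]
    simpa using hrhs0
  · -- 0 < p
    set q := 1 - p with hq
    have hq0 : 0 < q := by rw [hq]; linarith
    have hqp1 : 1 ≤ q / p := (one_le_div hp0').mpr (by linarith)
    set lam := Real.log (q / p) with hlam
    have hlam0 : 0 ≤ lam := Real.log_nonneg hqp1
    have hexp : Real.exp lam = q / p := Real.exp_log (by positivity)
    have hptw : ∀ k ω, Real.exp (lam * X k ω) = (Real.exp lam - 1) * X k ω + 1 := by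
      intro k ω
      rcases hX01 k ω with h | h <;> rw [h] <;> simp
    have hXint : ∀ k, Integrable (X k) P := by
      intro k
      refine ⟨(hmeas k).aestronglyMeasurable, HasFiniteIntegral.of_bounded (C := 1) ?_⟩
      filter_upwards with ω
      rcases hX01 k ω with h | h <;> simp [h]
    have hEX : ∀ k, ∫ ω, X k ω ∂P = p := by
      intro k
      have hA : MeasurableSet {ω | X k ω = 1} := (hmeas k) (measurableSet_singleton 1)
      have hXind : X k = Set.indicator {ω | X k ω = 1} (fun _ => (1:ℝ)) := by
        funext ω
        rcases hX01 k ω with h | h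
        · rw [h]; symm; apply Set.indicator_of_notMem; simp [Set.mem_setOf_eq, h]
        · rw [h]; symm; exact Set.indicator_of_mem (by simp [Set.mem_setOf_eq, h]) _
      rw [hXind, integral_indicator_const (1:ℝ) hA]
      simp [measureReal_def, hp k]
    have hmgf : ∀ k, ProbabilityTheory.mgf (X k) P lam = (Real.exp lam - 1) * p + 1 := by
      intro k
      unfold ProbabilityTheory.mgf
      calc (∫ ω, Real.exp (lam * X k ω) ∂P)
          = ∫ ω, ((Real.exp lam - 1) * X k ω + 1) ∂P := by
            congr 1; funext ω; exact hptw k ω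
        _ = (Real.exp lam - 1) * (∫ ω, X k ω ∂P) + 1 := by
            rw [integral_add ((hXint k).const_mul _) (integrable_const 1),
              integral_const_mul, integral_const]
            simp
        _ = (Real.exp lam - 1) * p + 1 := by rw [hEX k]
    set S : Ω → ℝ := ∑ k ∈ Finset.range n, X k with hS
    have hSapp : ∀ ω, S ω = ∑ k ∈ Finset.range n, X k ω := fun ω => by
      rw [hS]; simp [Finset.sum_apply]
    have hSmeas : Measurable S := by
      rw [show S = fun ω => ∑ k ∈ Finset.range n, X k ω from funext hSapp]
      exact Finset.measurable_sum _ (fun k _ => hmeas k)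
    have hSbound : ∀ ω, lam * S ω ≤ lam * n := by
      intro ω
      have h1 : S ω ≤ n := by
        rw [hSapp]
        calc (∑ k ∈ Finset.range n, X k ω) ≤ ∑ k ∈ Finset.range n, 1 :=
            Finset.sum_le_sum (fun k _ => by rcases hX01 k ω with h|h <;> simp [h])
          _ = n := by simp
      exact mul_le_mul_of_nonneg_left h1 hlam0
    have hSint : Integrable (fun ω => Real.exp (lam * S ω)) P := by
      refine ⟨((hSmeas.const_mul lam).exp).aestronglyMeasurable,
        HasFiniteIntegral.of_bounded (C := Real.exp (lam * n)) ?_⟩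
      filter_upwards with ω
      rw [Real.norm_eq_abs, abs_of_pos (Real.exp_pos _)]
      exact Real.exp_le_exp.mpr (hSbound ω)
    have hcher := ProbabilityTheory.measure_ge_le_exp_mul_mgf (μ := P) (X := S)
      ((n:ℝ)/2) hlam0 hSint
    have hmgfS : ProbabilityTheory.mgf S P lam = (2*q)^n := by
      rw [hS, hindep.mgf_sum hmeas (Finset.range n),
        Finset.prod_congr rfl (fun k _ => hmgf k), Finset.prod_const, Finset.card_range]
      congr 1
      rw [hexp]
      field_simp
      ring
    rw [hmgfS] at hcher
    have hqp' : (0:ℝ) < q/p := by positivity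
    have e1 : Real.exp (-lam * ((n:ℝ)/2)) = (q/p) ^ (-((n:ℝ)/2)) := by
      rw [Real.rpow_def_of_pos hqp', hlam]
      ring_nf
    have e4 : ((2*q):ℝ)^((2:ℕ):ℝ) = (4*p*q) * (q/p) := by
      rw [Real.rpow_natCast]
      field_simp
      ring
    have e3 : ((2*q):ℝ) ^ ((n:ℝ)) = (((2*q):ℝ)^((2:ℕ):ℝ)) ^ ((n:ℝ)/2) := by
      rw [← Real.rpow_mul (by linarith : (0:ℝ) ≤ 2*q)]
      congr 1
      push_cast
      ring
    have e5 : Real.exp (-lam * ((n:ℝ)/2)) * ((2*q)^n : ℝ) = (4*p*q) ^ ((n:ℝ)/2) := by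
      rw [e1, ← Real.rpow_natCast ((2*q):ℝ) n, e3, e4,
        Real.mul_rpow (by positivity) (by positivity), Real.rpow_neg hqp'.le]
      have hne : (q/p) ^ ((n:ℝ)/2) ≠ 0 := (Real.rpow_pos_of_pos hqp' _).ne'
      field_simp
    rw [e5] at hcher
    have hset : {ω | (n:ℝ)/2 ≤ ∑ k ∈ Finset.range n, X k ω} = {ω | (n:ℝ)/2 ≤ S ω} := by
      ext ω; rw [Set.mem_setOf_eq, Set.mem_setOf_eq, hSapp]
    rw [hset, hq]
    convert hcher using 2
    rfl


/-- Two-sided concentration of the empirical median on the line: if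
`ν((−∞,0)) = ν((0,∞)) = 1/2`, then for every `n ≥ 1` and `t > 0`,
`P(|m̂_n| ≥ t) ≤ (1 − 4D(t)²)^{n/2} + (1 − 4D(−t)²)^{n/2}`, where
`D(t) = ν((0,t))` for `t > 0` and `D(t) = ν((t,0))` for `t < 0`. -/
theorem stmt_15 (ν : Measure ℝ) [IsProbabilityMeasure ν]
    (A B : ℝ) (hsupp : ν (Set.Icc A B) = 1)
    (hleft : ν (Set.Iio 0) = 1 / 2) (hright : ν (Set.Ioi 0) = 1 / 2)
    {Ω : Type*} [MeasurableSpace Ω] (P : Measure Ω) [IsProbabilityMeasure P]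
    (Y : ℕ → Ω → ℝ)
    (hY_meas : ∀ k, Measurable (Y k))
    (hY_dist : ∀ k, P.map (Y k) = ν)
    (hY_indep : ProbabilityTheory.iIndepFun Y P)
    (mhat : ℕ → Ω → ℝ)
    (hmhat_meas : ∀ n, Measurable (mhat n))
    (hmhat_med : ∀ n, 1 ≤ n → ∀ ω β,
      (∑ k ∈ Finset.range n, |mhat n ω - Y k ω|) ≤ ∑ k ∈ Finset.range n, |β - Y k ω|) :
    ∀ n : ℕ, 1 ≤ n → ∀ t : ℝ, 0 < t →
      (P {ω | t ≤ |mhat n ω|}).toReal ≤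
        (1 - 4 * (ν (Set.Ioo 0 t)).toReal ^ 2) ^ ((n : ℝ) / 2)
          + (1 - 4 * (ν (Set.Ioo (-t) 0)).toReal ^ 2) ^ ((n : ℝ) / 2) := by
  intro n hn t ht
  classical
  have hgPm : Measurable (fun y : ℝ => if t ≤ y then (1:ℝ) else 0) :=
    Measurable.ite (measurableSet_le measurable_const measurable_id)
      measurable_const measurable_const
  have hgMm : Measurable (fun y : ℝ => if y ≤ -t then (1:ℝ) else 0) :=
    Measurable.ite (measurableSet_le measurable_id measurable_const)
      measurable_const measurable_const
  set XP : ℕ → Ω → ℝ := fun k ω => if t ≤ Y k ω then 1 else 0 with hXP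
  set XM : ℕ → Ω → ℝ := fun k ω => if Y k ω ≤ -t then 1 else 0 with hXM
  have hXPmeas : ∀ k, Measurable (XP k) := fun k => hgPm.comp (hY_meas k)
  have hXMmeas : ∀ k, Measurable (XM k) := fun k => hgMm.comp (hY_meas k)
  have hXPindep : ProbabilityTheory.iIndepFun XP P :=
    hY_indep.comp _ (fun _ => hgPm)
  have hXMindep : ProbabilityTheory.iIndepFun XM P :=
    hY_indep.comp _ (fun _ => hgMm)
  set pP := (ν (Set.Ici t)).toReal with hpP
  set pM := (ν (Set.Iic (-t))).toReal with hpM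
  set DP := (ν (Set.Ioo 0 t)).toReal with hDP
  set DM := (ν (Set.Ioo (-t) 0)).toReal with hDM
  have hDP0 : 0 ≤ DP := ENNReal.toReal_nonneg
  have hDM0 : 0 ≤ DM := ENNReal.toReal_nonneg
  have hpP0 : 0 ≤ pP := ENNReal.toReal_nonneg
  have hpM0 : 0 ≤ pM := ENNReal.toReal_nonneg
  have hPP : ∀ k, (P {ω | XP k ω = 1}).toReal = pP := by
    intro k
    have hs : {ω | XP k ω = 1} = (Y k)⁻¹' (Set.Ici t) := by
      ext ω
      simp only [hXP, Set.mem_setOf_eq, Set.mem_preimage, Set.mem_Ici]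
      split_ifs with h
      · simp [h]
      · simp [h]
    rw [hs, ← Measure.map_apply (hY_meas k) measurableSet_Ici, hY_dist k]
  have hPM : ∀ k, (P {ω | XM k ω = 1}).toReal = pM := by
    intro k
    have hs : {ω | XM k ω = 1} = (Y k)⁻¹' (Set.Iic (-t)) := by
      ext ω
      simp only [hXM, Set.mem_setOf_eq, Set.mem_preimage, Set.mem_Iic]
      split_ifs with h
      · simp [h]
      · simp [h]
    rw [hs, ← Measure.map_apply (hY_meas k) measurableSet_Iic, hY_dist k]
  have hνP : ν (Set.Ioo 0 t) + ν (Set.Ici t) ≤ 1/2 := by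
    have hdisj : Disjoint (Set.Ioo 0 t) (Set.Ici t) :=
      Set.disjoint_left.mpr fun x hx hx' => absurd hx' (not_le.mpr hx.2)
    calc ν (Set.Ioo 0 t) + ν (Set.Ici t) = ν (Set.Ioo 0 t ∪ Set.Ici t) :=
        (measure_union hdisj measurableSet_Ici).symm
      _ ≤ ν (Set.Ioi 0) := by
        apply measure_mono
        rintro x (hx | hx)
        · exact hx.1
        · exact lt_of_lt_of_le ht hx
      _ = 1/2 := hright
  have hνM : ν (Set.Ioo (-t) 0) + ν (Set.Iic (-t)) ≤ 1/2 := by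
    have hdisj : Disjoint (Set.Ioo (-t) 0) (Set.Iic (-t)) :=
      Set.disjoint_left.mpr fun x hx hx' => absurd hx' (not_le.mpr hx.1)
    calc ν (Set.Ioo (-t) 0) + ν (Set.Iic (-t)) = ν (Set.Ioo (-t) 0 ∪ Set.Iic (-t)) :=
        (measure_union hdisj measurableSet_Iic).symm
      _ ≤ ν (Set.Iio 0) := by
        apply measure_mono
        rintro x (hx | hx)
        · exact hx.2
        · have hx' : x ≤ -t := hx
          show x < 0
          linarith
      _ = 1/2 := hleft
  have hrealP : DP + pP ≤ 1/2 := by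
    have h1 := ENNReal.toReal_mono (by norm_num) hνP
    rw [ENNReal.toReal_add (measure_ne_top _ _) (measure_ne_top _ _)] at h1
    simpa using h1
  have hrealM : DM + pM ≤ 1/2 := by
    have h1 := ENNReal.toReal_mono (by norm_num) hνM
    rw [ENNReal.toReal_add (measure_ne_top _ _) (measure_ne_top _ _)] at h1
    simpa using h1
  have hsub : {ω | t ≤ |mhat n ω|}
      ⊆ {ω | (n:ℝ)/2 ≤ ∑ k ∈ Finset.range n, XP k ω}
        ∪ {ω | (n:ℝ)/2 ≤ ∑ k ∈ Finset.range n, XM k ω} := by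
    intro ω hω
    simp only [Set.mem_setOf_eq] at hω
    rcases le_abs.mp hω with h | h
    · left
      exact median_count hn (fun k => Y k ω) (mhat n ω) t h (hmhat_med n hn ω)
    · right
      exact median_count_neg hn (fun k => Y k ω) (mhat n ω) t (by linarith) (hmhat_med n hn ω)
  have hUB : (P {ω | t ≤ |mhat n ω|}).toReal
      ≤ (P {ω | (n:ℝ)/2 ≤ ∑ k ∈ Finset.range n, XP k ω}).toReal
        + (P {ω | (n:ℝ)/2 ≤ ∑ k ∈ Finset.range n, XM k ω}).toReal := by
    have h1 : P {ω | t ≤ |mhat n ω|}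
        ≤ P {ω | (n:ℝ)/2 ≤ ∑ k ∈ Finset.range n, XP k ω}
          + P {ω | (n:ℝ)/2 ≤ ∑ k ∈ Finset.range n, XM k ω} :=
      (measure_mono hsub).trans (measure_union_le _ _)
    have h2 := ENNReal.toReal_mono
      (ENNReal.add_ne_top.mpr ⟨measure_ne_top _ _, measure_ne_top _ _⟩) h1
    rwa [ENNReal.toReal_add (measure_ne_top _ _) (measure_ne_top _ _)] at h2
  have hchP := chernoff_half P n hn XP
    (fun k ω => by simp only [hXP]; split_ifs <;> simp)
    hXPmeas hXPindep pP hPP (by linarith)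
  have hchM := chernoff_half P n hn XM
    (fun k ω => by simp only [hXM]; split_ifs <;> simp)
    hXMmeas hXMindep pM hPM (by linarith)
  refine hUB.trans (add_le_add (hchP.trans ?_) (hchM.trans ?_))
  · have ha : (0:ℝ) ≤ 1 - 2*pP - 2*DP := by linarith
    have hb : (0:ℝ) ≤ 1 - 2*pP + 2*DP := by linarith
    exact Real.rpow_le_rpow (by nlinarith) (by nlinarith [mul_nonneg ha hb]) (by positivity)
  · have ha : (0:ℝ) ≤ 1 - 2*pM - 2*DM := by linarith
    have hb : (0:ℝ) ≤ 1 - 2*pM + 2*DM := by linarith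
    exact Real.rpow_le_rpow (by nlinarith) (by nlinarith [mul_nonneg ha hb]) (by positivity)
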